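/- Suppose for t = 1,…,d the observed demands are noise-free, q_t = U z_t − U V_t Uᵀ p_t, where U ∈ ℝ^{N×d} has orthonormal columns (d ≤ N), each V_t ∈ ℝ^{d×d} is (possibly asymmetric) strictly positive definite (xᵀV_t x > 0 for all x ≠ 0), and the price vectors are p_t = p̃_t + ζ_t where z_t, V_t, p̃_t are fixed deterministic quantities and ζ_1,…,ζ_d are independent random vectors, each uniformly distributed in a Euclidean ball of strictly positive radius in ℝᴺ. Then almost surely span(q_1,…,q_d) equals the column span of U. -/

import Mathlib

open Matrix MeasureTheory ProbabilityTheory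

namespace Stmt6

/-- Reinterpret a plain vector `Fin n → ℝ` as an element of `EuclideanSpace ℝ (Fin n)`,
so that `‖·‖` denotes the Euclidean (ℓ²) norm. -/
def toEuc {n : ℕ} (v : Fin n → ℝ) : EuclideanSpace ℝ (Fin n) := WithLp.toLp 2 v

/-- The uniform probability measure on the closed Euclidean ball of center `c`
and radius `ρ` in `ℝᴺ`. -/
noncomputable def uniformOnBall {N : ℕ} (c : EuclideanSpace ℝ (Fin N)) (ρ : ℝ) :
    Measure (EuclideanSpace ℝ (Fin N)) :=
  (volume (Metric.closedBall c ρ))⁻¹ • volume.restrict (Metric.closedBall c ρ)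

section Aux

lemma uniformOnBall_prob {N : ℕ} (c : EuclideanSpace ℝ (Fin N)) {ρ : ℝ} (hρ : 0 < ρ) :
    IsProbabilityMeasure (uniformOnBall c ρ) := by
  constructor
  rw [uniformOnBall, Measure.smul_apply, Measure.restrict_apply MeasurableSet.univ,
    Set.univ_inter, smul_eq_mul]
  exact ENNReal.inv_mul_cancel (Metric.measure_closedBall_pos _ _ hρ).ne'
    measure_closedBall_lt_top.ne

lemma uniformOnBall_null {N : ℕ} (c : EuclideanSpace ℝ (Fin N)) (ρ : ℝ)
    {S : Set (EuclideanSpace ℝ (Fin N))} (hS : volume S = 0) : uniformOnBall c ρ S = 0 := by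
  have h1 : volume.restrict (Metric.closedBall c ρ) S = 0 :=
    le_antisymm ((Measure.restrict_le_self (μ := volume) (s := Metric.closedBall c ρ) S).trans
      hS.le) (zero_le)
  rw [uniformOnBall, Measure.smul_apply, h1, smul_eq_mul, mul_zero]

/-- Gram determinant of a finite family of vectors in `ℝᵈ`. -/
noncomputable def gram {k d : ℕ} (v : Fin k → (Fin d → ℝ)) : ℝ :=
  ((Matrix.of v)ᵀᴴ * (Matrix.of v)ᵀ).det

lemma linearIndependent_iff_gram {k d : ℕ} (v : Fin k → (Fin d → ℝ)) :
    LinearIndependent ℝ v ↔ gram v ≠ 0 := by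
  set A : Matrix (Fin d) (Fin k) ℝ := (Matrix.of v)ᵀ with hA
  have h1 : LinearIndependent ℝ v ↔ Function.Injective A.mulVec :=
    (Matrix.mulVec_injective_iff (M := A)).symm
  have h2 : Function.Injective A.mulVec ↔ Function.Injective (Aᴴ * A).mulVec := by
    rw [← Matrix.coe_mulVecLin, ← Matrix.coe_mulVecLin, ← LinearMap.ker_eq_bot,
      ← LinearMap.ker_eq_bot, Matrix.ker_mulVecLin_conjTranspose_mul_self]
  rw [h1, h2, Matrix.mulVec_injective_iff_isUnit, Matrix.isUnit_iff_isUnit_det, isUnit_iff_ne_zero]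
  rfl

lemma measurable_det {k : ℕ} {α : Type*} [MeasurableSpace α] {M : α → Matrix (Fin k) (Fin k) ℝ}
    (hM : ∀ i j, Measurable fun x => M x i j) : Measurable fun x => (M x).det := by
  simp only [Matrix.det_apply']
  exact Finset.measurable_sum _ fun σ _ =>
    (Finset.measurable_prod _ fun i _ => hM _ _).const_mul _

lemma measurable_gram {k d : ℕ} {α : Type*} [MeasurableSpace α]
    {g : Fin k → α → (Fin d → ℝ)} (hg : ∀ s, Measurable (g s)) :
    Measurable fun x => gram (fun s => g s x) := by
  unfold gram
  refine measurable_det fun s s' => ?_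
  simp only [Matrix.mul_apply, Matrix.conjTranspose_apply, Matrix.transpose_apply,
    Matrix.of_apply, star_trivial]
  exact Finset.measurable_sum _ fun i _ =>
    ((measurable_pi_apply i).comp (hg s)).mul ((measurable_pi_apply i).comp (hg s'))

lemma null_affine {N d : ℕ} (B : Matrix (Fin d) (Fin N) ℝ)
    (hB : Function.Surjective B.mulVec) {W : Submodule ℝ (Fin d → ℝ)} (hW : W ≠ ⊤)
    (a : Fin d → ℝ) :
    volume {x : EuclideanSpace ℝ (Fin N) | a - B.mulVec x ∈ W} = 0 := by
  obtain ⟨x₀, hx₀⟩ := hB a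
  set L : EuclideanSpace ℝ (Fin N) →ₗ[ℝ] (Fin d → ℝ) :=
    B.mulVecLin ∘ₗ (WithLp.linearEquiv 2 ℝ (∀ _ : Fin N, ℝ)).toLinearMap with hL
  have hLapp : ∀ x : EuclideanSpace ℝ (Fin N), L x = B.mulVec x := fun x => rfl
  set x₀' : EuclideanSpace ℝ (Fin N) := WithLp.toLp 2 x₀ with hx₀'
  have hset : {x : EuclideanSpace ℝ (Fin N) | a - B.mulVec x ∈ W}
      = (fun x : EuclideanSpace ℝ (Fin N) => x + (-x₀')) ⁻¹' ((W.comap L : Submodule ℝ _) : Set _) := by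
    ext x
    simp only [Set.mem_setOf_eq, Set.mem_preimage, SetLike.mem_coe, Submodule.mem_comap]
    have : L (x + -x₀') = B.mulVec x - a := by
      rw [map_add, map_neg, hLapp, hLapp, ← hx₀, sub_eq_add_neg]
    rw [this, ← neg_sub (B.mulVec x) a, Submodule.neg_mem_iff]
  rw [hset, measure_preimage_add_right]
  refine Measure.addHaar_submodule _ _ fun hcon => hW ?_
  rw [eq_top_iff]
  intro v _
  obtain ⟨x, hx⟩ := hB v
  have hmem : B.mulVec x ∈ W := by
    have h2 : (WithLp.toLp 2 x : EuclideanSpace ℝ (Fin N)) ∈ Submodule.comap L W := by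
      rw [hcon]; trivial
    exact Submodule.mem_comap.mp h2
  rwa [hx] at hmem

lemma key {N d : ℕ} (hd : 0 < d)
    (B : Fin d → Matrix (Fin d) (Fin N) ℝ) (hB : ∀ t, Function.Surjective (B t).mulVec)
    (a : Fin d → (Fin d → ℝ)) (lam : Fin d → Measure (EuclideanSpace ℝ (Fin N)))
    [∀ t, IsProbabilityMeasure (lam t)]
    (hnull : ∀ t (S : Set (EuclideanSpace ℝ (Fin N))), volume S = 0 → lam t S = 0) :
    Measure.pi lam {w | ¬ LinearIndependent ℝ (fun t : Fin d => a t - (B t).mulVec (w t))} = 0 := by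
  obtain ⟨m, rfl⟩ : ∃ m, d = m + 1 := ⟨d - 1, (Nat.succ_pred_eq_of_pos hd).symm⟩
  classical
  set E := EuclideanSpace ℝ (Fin N)
  set f : Fin (m + 1) → (Fin (m + 1) → E) → (Fin (m + 1) → ℝ) :=
    fun t w => a t - (B t).mulVec (w t) with hf
  have hcoord : ∀ (t : Fin (m+1)) (j : Fin N), Measurable fun w : Fin (m+1) → E => w t j := by
    intro t j
    have h1 : Measurable fun w : Fin (m+1) → E => w t := measurable_pi_apply t
    have h2 : Measurable fun x : EuclideanSpace ℝ (Fin N) => x j := by fun_prop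
    exact h2.comp h1
  have hfmeas : ∀ t, Measurable (f t) := by
    intro t
    refine measurable_pi_lambda _ fun i => ?_
    have : (fun w : Fin (m+1) → E => f t w i)
        = fun w => a t i - ∑ j, B t i j * w t j := by
      funext w; simp [hf, Matrix.mulVec, dotProduct]
    rw [this]
    exact measurable_const.sub (Finset.measurable_sum _ fun j _ => (hcoord t j).const_mul _)
  -- bad sets
  set Bad : ∀ k, k ≤ m + 1 → Set (Fin (m + 1) → E) :=
    fun k hk => {w | ¬ LinearIndependent ℝ (fun s : Fin k => f (Fin.castLE hk s) w)} with hBad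
  have hBadMeas : ∀ k hk, MeasurableSet (Bad k hk) := by
    intro k hk
    have : Bad k hk = (fun w => gram (fun s : Fin k => f (Fin.castLE hk s) w)) ⁻¹' {0} := by
      ext w
      simp only [hBad, Set.mem_setOf_eq, Set.mem_preimage, Set.mem_singleton_iff,
        linearIndependent_iff_gram, not_not]
    rw [this]
    exact (measurable_gram fun s => hfmeas _) (measurableSet_singleton 0)
  suffices H : ∀ k (hk : k ≤ m + 1), Measure.pi lam (Bad k hk) = 0 by
    have h2 := H (m + 1) le_rfl
    have hcast : ∀ s : Fin (m + 1), Fin.castLE (le_refl (m + 1)) s = s := fun s => Fin.ext rfl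
    have h3 : Bad (m + 1) le_rfl
        = {w | ¬ LinearIndependent ℝ (fun t : Fin (m + 1) => a t - (B t).mulVec (w t))} := by
      ext w
      simp only [hBad, Set.mem_setOf_eq, hcast, hf]
    rw [← h3]
    exact h2
  intro k
  induction k with
  | zero =>
    intro hk
    have : Bad 0 hk = ∅ := by
      ext w; simp [hBad, linearIndependent_empty_type]
    rw [this, measure_empty]
  | succ k ih =>
    intro hk1
    have hk : k ≤ m + 1 := le_trans (Nat.le_succ k) hk1
    have hkm : k < m + 1 := hk1
    set t : Fin (m + 1) := ⟨k, hkm⟩ with ht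
    -- decomposition
    have hsub : Bad (k+1) hk1 ⊆ Bad k hk ∪ (Bad (k+1) hk1 ∩ (Bad k hk)ᶜ) := by
      intro w hw
      by_cases h : w ∈ Bad k hk
      · exact Or.inl h
      · exact Or.inr ⟨hw, h⟩
    refine measure_mono_null hsub (measure_union_null (ih hk) ?_)
    -- Fubini
    set D := Bad (k+1) hk1 ∩ (Bad k hk)ᶜ with hD
    have hDmeas : MeasurableSet D := (hBadMeas _ _).inter (hBadMeas _ _).compl
    set e := MeasurableEquiv.piFinSuccAbove (fun _ : Fin (m + 1) => E) t with he
    have hmp : MeasurePreserving e (Measure.pi lam)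
        ((lam t).prod (Measure.pi fun j => lam (t.succAbove j))) :=
      measurePreserving_piFinSuccAbove lam t
    have hpre : MeasurableSet (e.symm ⁻¹' D) := e.symm.measurable hDmeas
    have heq : Measure.pi lam D
        = ((lam t).prod (Measure.pi fun j => lam (t.succAbove j))) (e.symm ⁻¹' D) := by
      rw [← hmp.measure_preimage hpre.nullMeasurableSet]
      congr 1
      ext w
      simp
    rw [heq, Measure.prod_apply_symm hpre]
    have hzero : ∀ r : (∀ j : Fin m, E),
        lam t ((fun x : E => (x, r)) ⁻¹' (⇑e.symm ⁻¹' D)) = 0 := by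
      intro r
      rw [Set.preimage_preimage]
      have hes : ∀ x : E, e.symm (x, r) = t.insertNth x r := by
        intro x
        rw [MeasurableEquiv.piFinSuccAbove_symm_apply]
        rfl
      -- the first k vectors don't depend on x
      have hconst : ∀ (x : E) (s : Fin k),
          f (Fin.castLE hk s) (t.insertNth x r) = f (Fin.castLE hk s) (t.insertNth 0 r) := by
        intro x s
        have hne : (Fin.castLE hk s : Fin (m+1)) ≠ t := by
          intro hcon
          have := congrArg Fin.val hcon
          simp only [Fin.coe_castLE, ht] at this
          exact absurd this (Nat.ne_of_lt s.isLt)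
        obtain ⟨j, hj⟩ := Fin.exists_succAbove_eq hne
        rw [← hj]
        simp only [hf, Fin.insertNth_apply_succAbove]
      set vfun : Fin k → (Fin (m+1) → ℝ) := fun s => f (Fin.castLE hk s) (t.insertNth 0 r)
        with hvfun
      by_cases hLI : LinearIndependent ℝ vfun
      · -- slice is contained in an affine-preimage null set
        set W : Submodule ℝ (Fin (m+1) → ℝ) := Submodule.span ℝ (Set.range vfun) with hW
        have hWne : W ≠ ⊤ := by
          intro hcon
          have hle := finrank_le_of_span_eq_top (hW ▸ hcon)
          rw [Module.finrank_pi, Fintype.card_fin, Fintype.card_fin] at hle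
          omega
        refine measure_mono_null ?_ (hnull t _ (null_affine (B t) (hB t) hWne (a t)))
        intro x hx
        simp only [Set.mem_preimage, hes] at hx
        obtain ⟨hbad1, hbad0⟩ := hx
        simp only [hBad, Set.mem_setOf_eq] at hbad1
        have hsnoc : (fun s' : Fin (k+1) => f (Fin.castLE hk1 s') (t.insertNth x r))
            = Fin.snoc vfun (f t (t.insertNth x r)) := by
          funext s'
          refine Fin.lastCases ?_ ?_ s'
          · have h1 : Fin.castLE hk1 (Fin.last k) = t := Fin.ext rfl
            rw [Fin.snoc_last, h1]
          · intro s
            rw [Fin.snoc_castSucc]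
            have h1 : Fin.castLE hk1 s.castSucc = Fin.castLE hk s := Fin.ext rfl
            rw [h1]
            exact hconst x s
        rw [hsnoc, linearIndependent_fin_snoc] at hbad1
        push_neg at hbad1
        have hmem : f t (t.insertNth x r) ∈ W := hbad1 hLI
        simp only [hf, Fin.insertNth_apply_same] at hmem
        exact hmem
      · -- slice is empty
        have : (fun x : E => e.symm (x, r)) ⁻¹' D = ∅ := by
          ext x
          simp only [Set.mem_preimage, Set.mem_empty_iff_false, iff_false]
          intro hx
          rw [hes] at hx
          obtain ⟨_, hbad0⟩ := hx
          apply hbad0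
          simp only [hBad, Set.mem_compl_iff, Set.mem_setOf_eq, not_not] at hbad0 ⊢
          intro hLI'
          apply hLI
          have : vfun = fun s : Fin k => f (Fin.castLE hk s) (t.insertNth x r) := by
            funext s; rw [hvfun, hconst x s]
          rw [this]
          exact hLI'
        rw [this, measure_empty]
    simp only [hzero]
    exact lintegral_zero

end Aux

/-- **Lemma (noise-free demands reveal the latent span almost surely).**
Suppose for `t = 1,…,d` the noise-free demands are `q_t = U z_t − U V_t Uᵀ p_t`,
where `U ∈ ℝ^{N×d}` has orthonormal columns, each (possibly asymmetric) `V_t` is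
strictly positive definite, and `p_t = p̃_t + ζ_t` with `z_t, V_t, p̃_t` fixed and
`ζ_1,…,ζ_d` independent, each uniformly distributed in some Euclidean ball of
strictly positive radius.  Then almost surely
`span(q_1,…,q_d) = span(columns of U)`. -/
theorem stmt_6 {Ω : Type} [MeasurableSpace Ω] (μ : Measure Ω) [IsProbabilityMeasure μ]
    {N d : ℕ} (hd : 0 < d) (hdN : d ≤ N)
    (U : Matrix (Fin N) (Fin d) ℝ) (hU : Uᵀ * U = 1)
    (z : Fin d → EuclideanSpace ℝ (Fin d))
    (V : Fin d → Matrix (Fin d) (Fin d) ℝ)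
    (hVpos : ∀ t, ∀ x : Fin d → ℝ, x ≠ 0 → 0 < x ⬝ᵥ (V t).mulVec x)
    (ptilde : Fin d → EuclideanSpace ℝ (Fin N))
    (c : Fin d → EuclideanSpace ℝ (Fin N)) (ρ : Fin d → ℝ) (hρ : ∀ t, 0 < ρ t)
    (ζ : Fin d → Ω → EuclideanSpace ℝ (Fin N))
    (hζmeas : ∀ t, Measurable (ζ t))
    (hζindep : iIndepFun ζ μ)
    (hζunif : ∀ t, Measure.map (ζ t) μ = uniformOnBall (c t) (ρ t))
    (q : Fin d → Ω → EuclideanSpace ℝ (Fin N))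
    (hq : ∀ t ω, q t ω =
      toEuc (U.mulVec (z t)) -
        toEuc (U.mulVec ((V t).mulVec (Uᵀ.mulVec (ptilde t + ζ t ω))))) :
    ∀ᵐ ω ∂μ,
      Submodule.span ℝ (Set.range fun t => q t ω) =
        Submodule.span ℝ (Set.range fun j : Fin d => toEuc fun i => U i j) := by
  classical
  set lam := fun t => uniformOnBall (c t) (ρ t) with hlam
  haveI : ∀ t, IsProbabilityMeasure (lam t) := fun t => uniformOnBall_prob _ (hρ t)
  set Φ : Ω → (Fin d → EuclideanSpace ℝ (Fin N)) := fun ω t => ζ t ω with hΦdef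
  have hΦ : Measurable Φ := measurable_pi_lambda _ hζmeas
  have hlaw : Measure.map Φ μ = Measure.pi lam := by
    refine (Measure.pi_eq fun s hs => ?_).symm
    rw [Measure.map_apply hΦ (MeasurableSet.univ_pi hs)]
    have hpre : Φ ⁻¹' (Set.univ.pi s) = ⋂ t ∈ (Finset.univ : Finset (Fin d)), ζ t ⁻¹' s t := by
      ext ω
      simp [hΦdef, Set.mem_pi]
    rw [hpre, hζindep.measure_inter_preimage_eq_mul Finset.univ (fun i _ => hs i)]
    refine Finset.prod_congr rfl fun t _ => ?_
    rw [← Measure.map_apply (hζmeas t) (hs t), hζunif t]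
  -- matrices and offsets
  set B : Fin d → Matrix (Fin d) (Fin N) ℝ := fun t => V t * Uᵀ with hBdef
  set a : Fin d → (Fin d → ℝ) :=
    fun t => (WithLp.equiv 2 (Fin d → ℝ)) (z t) - (V t).mulVec (Uᵀ.mulVec (ptilde t)) with hadef
  have hVsurj : ∀ t, Function.Surjective (V t).mulVec := by
    intro t
    have hinj : Function.Injective (V t).mulVecLin := by
      rw [← LinearMap.ker_eq_bot, eq_bot_iff]
      intro x hx
      rw [LinearMap.mem_ker, Matrix.mulVecLin_apply] at hx
      by_contra hne
      have hx0 : x ≠ 0 := fun h => hne (h ▸ Submodule.zero_mem _)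
      have := hVpos t x hx0
      rw [hx, dotProduct_zero] at this
      exact lt_irrefl _ this
    have := (LinearMap.injective_iff_surjective (f := (V t).mulVecLin)).mp hinj
    exact this
  have hBsurj : ∀ t, Function.Surjective (B t).mulVec := by
    intro t v
    obtain ⟨u, hu⟩ := hVsurj t v
    refine ⟨U.mulVec u, ?_⟩
    show (V t * Uᵀ) *ᵥ (U *ᵥ u) = v
    rw [Matrix.mulVec_mulVec, Matrix.mul_assoc, hU, Matrix.mul_one]
    exact hu
  have hkey : Measure.pi lam
      {w | ¬ LinearIndependent ℝ (fun t : Fin d => a t - (B t).mulVec (w t))} = 0 :=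
    key hd B hBsurj a lam (fun t S hS => uniformOnBall_null _ _ hS)
  have hmeasbad : MeasurableSet
      {w : Fin d → EuclideanSpace ℝ (Fin N) |
        ¬ LinearIndependent ℝ (fun t : Fin d => a t - (B t).mulVec (w t))} := by
    have : {w : Fin d → EuclideanSpace ℝ (Fin N) |
        ¬ LinearIndependent ℝ (fun t : Fin d => a t - (B t).mulVec (w t))}
        = (fun w => gram (fun t : Fin d => a t - (B t).mulVec (w t))) ⁻¹' {0} := by
      ext w
      simp only [Set.mem_setOf_eq, Set.mem_preimage, Set.mem_singleton_iff,
        linearIndependent_iff_gram, not_not]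
    rw [this]
    refine (measurable_gram fun t => ?_) (measurableSet_singleton 0)
    refine measurable_pi_lambda _ fun i => ?_
    have hcoord : ∀ (j : Fin N),
        Measurable fun w : Fin d → EuclideanSpace ℝ (Fin N) => w t j := by
      intro j
      have h1 : Measurable fun w : Fin d → EuclideanSpace ℝ (Fin N) => w t :=
        measurable_pi_apply t
      have h2 : Measurable fun x : EuclideanSpace ℝ (Fin N) => x j := by fun_prop
      exact h2.comp h1
    have : (fun w : Fin d → EuclideanSpace ℝ (Fin N) => (a t - (B t).mulVec (w t)) i)
        = fun w => a t i - ∑ j, B t i j * w t j := by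
      funext w; simp [Matrix.mulVec, dotProduct]
    rw [this]
    exact measurable_const.sub (Finset.measurable_sum _ fun j _ => (hcoord j).const_mul _)
  have hμ : μ (Φ ⁻¹'
      {w | ¬ LinearIndependent ℝ (fun t : Fin d => a t - (B t).mulVec (w t))}) = 0 := by
    rw [← Measure.map_apply hΦ hmeasbad, hlaw]
    exact hkey
  rw [ae_iff]
  refine measure_mono_null ?_ hμ
  intro ω hω
  simp only [Set.mem_setOf_eq, Set.mem_preimage] at hω ⊢
  intro hLI
  apply hω
  -- from linear independence derive the span equality
  set yv : Fin d → (Fin d → ℝ) := fun t => a t - (B t).mulVec (ζ t ω) with hyv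
  haveI : Nonempty (Fin d) := ⟨⟨0, hd⟩⟩
  have hspan : Submodule.span ℝ (Set.range yv) = ⊤ := by
    refine hLI.span_eq_top_of_card_eq_finrank ?_
    simp [Module.finrank_pi]
  set L' : (Fin d → ℝ) →ₗ[ℝ] EuclideanSpace ℝ (Fin N) :=
    (WithLp.linearEquiv 2 ℝ (∀ _ : Fin N, ℝ)).symm.toLinearMap ∘ₗ U.mulVecLin with hL'
  have hL'app : ∀ v : Fin d → ℝ, L' v = toEuc (U.mulVec v) := fun v => rfl
  have hq' : ∀ t, q t ω = L' (yv t) := by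
    intro t
    have h1 : (WithLp.equiv 2 (Fin d → ℝ)) (z t)
        - (V t).mulVec (Uᵀ.mulVec ((WithLp.equiv 2 (Fin N → ℝ)) (ptilde t)
          + (WithLp.equiv 2 (Fin N → ℝ)) (ζ t ω))) = yv t := by
      show _ = a t - (B t).mulVec (ζ t ω)
      simp only [hadef, hBdef, Matrix.mulVec_add, Matrix.mulVec_mulVec, sub_sub]
      rfl
    rw [hq, hL'app, ← h1, Matrix.mulVec_sub]
    rfl
  have hrange : (Set.range fun t => q t ω) = ⇑L' '' Set.range yv := by
    rw [← Set.range_comp]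
    exact congrArg Set.range (funext hq')
  have hsingle : (fun j : Fin d => toEuc (n := N) fun i => U i j)
      = fun j => L' (Pi.single j 1) := by
    funext j
    rw [hL'app, Matrix.mulVec_single_one]
    rfl
  have hsingletop :
      Submodule.span ℝ (Set.range fun j : Fin d => (Pi.single j 1 : Fin d → ℝ)) = ⊤ := by
    rw [eq_top_iff]
    intro x _
    have hx : x = ∑ j, x j • (Pi.single j 1 : Fin d → ℝ) := by
      funext i
      rw [Finset.sum_apply]
      simp [Pi.single_apply]
    rw [hx]
    exact Submodule.sum_mem _ fun j _ =>
      Submodule.smul_mem _ _ (Submodule.subset_span ⟨j, rfl⟩)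
  calc Submodule.span ℝ (Set.range fun t => q t ω)
      = Submodule.map L' (Submodule.span ℝ (Set.range yv)) := by
        rw [hrange, Submodule.span_image]
    _ = Submodule.map L' ⊤ := by rw [hspan]
    _ = Submodule.span ℝ (Set.range fun j : Fin d => toEuc fun i => U i j) := by
        rw [hsingle]
        have : (Set.range fun j : Fin d => L' (Pi.single j 1))
            = ⇑L' '' Set.range (fun j : Fin d => (Pi.single j 1 : Fin d → ℝ)) := by
          rw [← Set.range_comp]
          rfl
        rw [this, Submodule.span_image, hsingletop]

end Stmt6
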